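/- arXiv:1705.04648 — 6 statements merged into one kernel-verified Lean document; each statement's English description precedes it below -/
import Mathlib

section
/- Let b ≤ -2. If a > (|b|-1)(|b|^2 - |b| + 1), then 0 < S_{2,b}(a) < a. -/
/-- The value of a digit list `L = [a₀, a₁, …, aₙ]` in base `b`: `Σ aᵢ bⁱ`. -/
def baseVal (b : ℤ) : List ℤ → ℤ
  | [] => 0
  | d :: L => d + b * baseVal b L

/-- `L` is the base-`b` digit expansion of `a`: digits in `[0, |b|-1]`,
leading (last) digit nonzero, with value `a`. -/
def IsDigitExpansion (b a : ℤ) (L : List ℤ) : Prop :=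
  (∀ d ∈ L, 0 ≤ d ∧ d ≤ |b| - 1) ∧ L ≠ [] ∧ L.getLast! ≠ 0 ∧ baseVal b L = a

/-- `S` is the function `S_{e,b}` sending `a` to the sum of `e`-th powers of its
base-`b` digits (and `0` to `0`). -/
def IsPowSumFun (e : ℕ) (b : ℤ) (S : ℤ → ℤ) : Prop :=
  S 0 = 0 ∧ ∀ a L, IsDigitExpansion b a L → S a = (L.map (· ^ e)).sum

def negQ (b a : ℤ) : ℤ := (a - a % (-b)) / b

lemma negQ_spec {b : ℤ} (hb : b ≤ -2) (a : ℤ) :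
    a = a % (-b) + b * negQ b a ∧ 0 ≤ a % (-b) ∧ a % (-b) < -b := by
  have hb0 : (-b) ≠ 0 := by omega
  have hbp : 0 < -b := by omega
  refine ⟨?_, Int.emod_nonneg a hb0, Int.emod_lt_of_pos a hbp⟩
  have h1 : (-b) * (a / (-b)) + a % (-b) = a := Int.mul_ediv_add_emod a (-b)
  have h3 : b * (-(a / -b)) = (-b) * (a / -b) := by ring
  have h2 : a - a % (-b) = b * (-(a / (-b))) := by omega
  have : negQ b a = -(a / (-b)) := by
    rw [negQ, h2, Int.mul_ediv_cancel_left _ (by omega : b ≠ 0)]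
  rw [this]; omega

lemma negQ_measure {b a : ℤ} (hb : b ≤ -2) (ha : a ≠ 0) :
    2 * (negQ b a).natAbs + (if negQ b a < 0 then 1 else 0) <
      2 * a.natAbs + (if a < 0 then 1 else 0) := by
  obtain ⟨heq, hr0, hr1⟩ := negQ_spec hb a
  set q := negQ b a with hq
  set r := a % (-b) with hr
  have hB : 1 ≤ q → a ≤ 1 - 2 * q := by
    intro h
    nlinarith [mul_le_mul_of_nonneg_right hb (show (0:ℤ) ≤ q - 1 by omega)]
  have hC : q ≤ -1 → -2 * q ≤ a := by
    intro h
    nlinarith [mul_nonneg (show (0:ℤ) ≤ -(b+2) by omega) (show (0:ℤ) ≤ -q by omega)]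
  rcases lt_trichotomy q 0 with h | h | h
  · have := hC (by omega)
    split_ifs <;> omega
  · rw [h]
    split_ifs <;> omega
  · have := hB (by omega)
    split_ifs <;> omega

def negDigits (b : ℤ) (a : ℤ) : List ℤ :=
  if h : b ≤ -2 ∧ a ≠ 0 then
    (a % (-b)) :: negDigits b (negQ b a)
  else []
  termination_by (2 * a.natAbs + (if a < 0 then 1 else 0) : ℕ)
  decreasing_by
  · exact negQ_measure h.1 h.2

lemma negDigits_eq {b a : ℤ} (hb : b ≤ -2) (ha : a ≠ 0) :
    negDigits b a = (a % (-b)) :: negDigits b (negQ b a) := by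
  rw [negDigits]
  simp [hb, ha]

lemma negDigits_zero (b : ℤ) : negDigits b 0 = [] := by
  rw [negDigits]; simp

lemma negDigits_rec {b : ℤ} (hb : b ≤ -2) (P : ℤ → Prop)
    (step : ∀ a, (a ≠ 0 → P (negQ b a)) → P a) : ∀ a, P a := by
  have key : ∀ n : ℕ, ∀ a : ℤ,
      2 * a.natAbs + (if a < 0 then 1 else 0) < n → P a := by
    intro n
    induction n with
    | zero => intro a h; omega
    | succ n ih =>
      intro a h
      refine step a fun ha => ih _ ?_
      have := negQ_measure hb ha
      omega
  intro a
  exact key (2 * a.natAbs + 2) a (by split_ifs <;> omega)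

/-- sum of squares of negabase digits -/
def sqSum (b a : ℤ) : ℤ := ((negDigits b a).map (· ^ 2)).sum

lemma sqSum_zero (b : ℤ) : sqSum b 0 = 0 := by
  rw [sqSum, negDigits_zero]; rfl

lemma negQ_zero (b : ℤ) : negQ b 0 = 0 := by
  simp [negQ]

lemma sqSum_peel {b : ℤ} (hb : b ≤ -2) (a : ℤ) :
    sqSum b a = (a % (-b)) ^ 2 + sqSum b (negQ b a) := by
  rcases eq_or_ne a 0 with rfl | ha
  · rw [sqSum_zero, negQ_zero, sqSum_zero]
    simp
  · rw [sqSum, negDigits_eq hb ha]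
    simp [sqSum]

lemma baseVal_negDigits {b : ℤ} (hb : b ≤ -2) :
    ∀ a, baseVal b (negDigits b a) = a := by
  refine negDigits_rec hb _ fun a ih => ?_
  rcases eq_or_ne a 0 with rfl | ha
  · rw [negDigits_zero]; rfl
  · rw [negDigits_eq hb ha]
    have h := (negQ_spec hb a).1
    simp only [baseVal, ih ha]
    omega

lemma negDigits_mem {b : ℤ} (hb : b ≤ -2) :
    ∀ a, ∀ d ∈ negDigits b a, 0 ≤ d ∧ d ≤ -b - 1 := by
  refine negDigits_rec hb _ fun a ih => ?_
  rcases eq_or_ne a 0 with rfl | ha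
  · rw [negDigits_zero]; simp
  · rw [negDigits_eq hb ha]
    intro d hd
    rcases List.mem_cons.1 hd with rfl | hd
    · have := (negQ_spec hb a).2
      omega
    · exact ih ha d hd

lemma negDigits_ne_nil {b : ℤ} (hb : b ≤ -2) {a : ℤ} (ha : a ≠ 0) :
    negDigits b a ≠ [] := by
  rw [negDigits_eq hb ha]; simp

lemma getLast!_cons_ne_nil {x : ℤ} {l : List ℤ} (hl : l ≠ []) :
    (x :: l).getLast! = l.getLast! := by
  obtain ⟨c, cs, rfl⟩ := List.exists_cons_of_ne_nil hl
  rw [List.getLast!_cons_eq_getLastD, List.getLast!_cons_eq_getLastD, List.getLastD_cons]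

lemma negDigits_getLast {b : ℤ} (hb : b ≤ -2) :
    ∀ a, a ≠ 0 → (negDigits b a).getLast! ≠ 0 := by
  refine negDigits_rec hb _ fun a ih => ?_
  intro ha
  rw [negDigits_eq hb ha]
  rcases eq_or_ne (negQ b a) 0 with hq | hq
  · rw [hq, negDigits_zero]
    have h := (negQ_spec hb a).1
    rw [hq, mul_zero, add_zero] at h
    rw [List.getLast!_cons_eq_getLastD, List.getLastD_nil]
    omega
  · rw [getLast!_cons_ne_nil (negDigits_ne_nil hb hq)]
    exact ih ha hq

lemma sqSum_pos {b : ℤ} (hb : b ≤ -2) : ∀ a, a ≠ 0 → 1 ≤ sqSum b a := by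
  refine negDigits_rec hb _ fun a ih => ?_
  intro ha
  rw [sqSum_peel hb a]
  obtain ⟨heq, hr0, hr1⟩ := negQ_spec hb a
  rcases eq_or_ne (negQ b a) 0 with hq | hq
  · rw [hq, sqSum_zero]
    rw [hq, mul_zero, add_zero] at heq
    have : 1 ≤ a % (-b) := by omega
    nlinarith
  · have := ih ha hq
    nlinarith

lemma peel2 {b : ℤ} (hb : b ≤ -2) (a : ℤ) :
    ∃ a0 a1 q, sqSum b a = a0 ^ 2 + a1 ^ 2 + sqSum b q ∧
      a = a0 + b * a1 + b * b * q ∧ 0 ≤ a0 ∧ a0 ≤ -b - 1 ∧ 0 ≤ a1 ∧ a1 ≤ -b - 1 ∧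
      (1 ≤ a → 0 ≤ q ∧ q < a) := by
  obtain ⟨heq1, hr1, hr1'⟩ := negQ_spec hb a
  obtain ⟨heq2, hr2, hr2'⟩ := negQ_spec hb (negQ b a)
  refine ⟨a % (-b), (negQ b a) % (-b), negQ b (negQ b a), ?_, ?_, by omega, by omega,
    by omega, by omega, ?_⟩
  · rw [sqSum_peel hb a, sqSum_peel hb (negQ b a)]
    ring
  · nlinarith [heq1, heq2]
  · intro ha
    set a0 := a % (-b)
    set a1 := (negQ b a) % (-b)
    set q := negQ b (negQ b a)
    have key : a = a0 + b * a1 + b * b * q := by nlinarith [heq1, heq2]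
    constructor
    · by_contra h
      push_neg at h
      have h1 : q ≤ -1 := by omega
      nlinarith [mul_nonneg (show (0:ℤ) ≤ -b by omega) hr2,
        mul_le_mul_of_nonneg_left h1 (mul_self_nonneg b)]
    · by_contra h
      push_neg at h
      nlinarith [mul_le_mul_of_nonpos_left (show a1 ≤ -b - 1 by omega)
          (show b ≤ 0 by omega),
        mul_le_mul_of_nonneg_left h (mul_self_nonneg b),
        mul_nonneg (show (0:ℤ) ≤ a - 1 by omega)
          (show (0:ℤ) ≤ b * b - 1 by nlinarith)]

lemma sqSum_one {b : ℤ} (hb : b ≤ -2) : sqSum b 1 = 1 := by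
  have h1 : (1 : ℤ) % (-b) = 1 := Int.emod_eq_of_lt (by norm_num) (by omega)
  have h2 : negQ b 1 = 0 := by
    rw [negQ, h1]
    simp
  rw [sqSum_peel hb 1, h1, h2, sqSum_zero]
  norm_num

lemma sqSum_two {b : ℤ} (hb : b ≤ -2) : sqSum b 2 ≤ 4 := by
  rcases eq_or_lt_of_le hb with rfl | hb3
  · have h1 : (2 : ℤ) % (-(-2)) = 0 := by norm_num
    have h2 : negQ (-2) 2 = -1 := by norm_num [negQ]
    have h3 : (-1 : ℤ) % (-(-2)) = 1 := by norm_num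
    have h4 : negQ (-2) (-1) = 1 := by norm_num [negQ]
    rw [sqSum_peel (by norm_num) 2, h1, h2, sqSum_peel (by norm_num) (-1), h3, h4,
      sqSum_one (by norm_num)]
    norm_num
  · have hb' : b ≤ -3 := by omega
    have h1 : (2 : ℤ) % (-b) = 2 := Int.emod_eq_of_lt (by norm_num) (by omega)
    have h2 : negQ b 2 = 0 := by
      rw [negQ, h1]
      simp
    rw [sqSum_peel hb 2, h1, h2, sqSum_zero]
    norm_num

lemma claimA {b : ℤ} (hb : b ≤ -2) :
    ∀ a : ℤ, 0 ≤ a → sqSum b a ≤ a + 2 * (-b - 1) * (-b - 2) := by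
  have main : ∀ n : ℕ, ∀ a : ℤ, 0 ≤ a → a ≤ n →
      sqSum b a ≤ a + 2 * (-b - 1) * (-b - 2) := by
    intro n
    induction n with
    | zero =>
      intro a h1 h2
      have h3 : a = 0 := by omega
      subst h3
      rw [sqSum_zero]
      nlinarith
    | succ n ih =>
      intro a h1 h2
      rcases le_or_gt a n with h | h
      · exact ih a h1 h
      · have ha1 : 1 ≤ a := by omega
        obtain ⟨a0, a1, q, hsq, heq, h00, h01, h10, h11, hq⟩ := peel2 hb a
        obtain ⟨hq0, hqa⟩ := hq ha1
        rw [hsq]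
        have x1 : (0:ℤ) ≤ (-b - 1 - a0) * (-b - 2 + a0) :=
          mul_nonneg (by omega) (by omega)
        have y1 : (0:ℤ) ≤ (-b - 1 - a1) * (-2 * b - 1 + a1) :=
          mul_nonneg (by omega) (by omega)
        rcases (by omega : q = 0 ∨ q = 1 ∨ q = 2 ∨ 3 ≤ q) with hq' | hq' | hq' | hq'
        · subst hq'
          have ha10 : a1 = 0 := by
            by_contra h'
            have h1' : 1 ≤ a1 := by omega
            nlinarith [mul_le_mul_of_nonpos_left h1' (show b ≤ 0 by omega)]
          subst ha10
          rw [sqSum_zero]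
          nlinarith
        · subst hq'
          rw [sqSum_one hb]
          nlinarith
        · subst hq'
          have h2' := sqSum_two hb
          nlinarith [mul_nonneg (show (0:ℤ) ≤ -b - 2 by omega)
            (show (0:ℤ) ≤ -b + 2 by omega)]
        · have iq := ih q hq0 (by omega)
          nlinarith [mul_nonneg (show (0:ℤ) ≤ q - 3 by omega)
            (show (0:ℤ) ≤ b * b - 1 by nlinarith)]
  intro a ha
  exact main a.toNat a ha (by omega)

lemma claimB {b : ℤ} (hb : b ≤ -2) {a : ℤ}
    (ha : (-b - 1) * ((-b) ^ 2 - (-b) + 1) < a) : sqSum b a < a := by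
  have hbb : (0:ℤ) ≤ b * b - 1 := by nlinarith
  have ha1 : 1 ≤ a := by
    have h1 : (1:ℤ) ≤ -b - 1 := by omega
    have h2 : (3:ℤ) ≤ (-b) ^ 2 - (-b) + 1 := by nlinarith
    have h3 := mul_le_mul h1 h2 (by norm_num) (by omega)
    nlinarith
  obtain ⟨a0, a1, q, hsq, heq, h00, h01, h10, h11, hq⟩ := peel2 hb a
  obtain ⟨hq0, hqa⟩ := hq ha1
  have hA := claimA hb q hq0
  have x1 : (0:ℤ) ≤ (-b - 1 - a0) * (-b - 2 + a0) :=
    mul_nonneg (by omega) (by omega)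
  have hba1 : b * a1 ≤ 0 := mul_nonpos_of_nonpos_of_nonneg (by omega) h10
  -- q ≥ -b - 1
  have hqlb : -b - 1 ≤ q := by
    have step : b * b * (-b - 2) < b * b * q := by nlinarith
    have := lt_of_mul_lt_mul_left step (mul_self_nonneg b)
    omega
  rw [hsq]
  rcases (by omega : q = -b - 1 ∨ -b ≤ q) with hq' | hq'
  · -- boundary case: a1 must be small
    have ha1b : a1 ≤ -b - 2 := by
      have step : (-b) * a1 < (-b) * (-b - 1) := by nlinarith
      have := lt_of_mul_lt_mul_left step (by omega : (0:ℤ) ≤ -b)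
      omega
    have y1' : (0:ℤ) ≤ (-b - 2 - a1) * (-2 * b - 2 + a1) :=
      mul_nonneg (by omega) (by omega)
    nlinarith [mul_nonneg (show (0:ℤ) ≤ -b - 1 by omega) (sq_nonneg (2 * b + 5))]
  · have y1 : (0:ℤ) ≤ (-b - 1 - a1) * (-2 * b - 1 + a1) :=
      mul_nonneg (by omega) (by omega)
    nlinarith [mul_nonneg (show (0:ℤ) ≤ q + b by omega) hbb,
      mul_nonneg (show (0:ℤ) ≤ -b - 1 by omega) (sq_nonneg (b + 2))]

theorem gets_smaller (b : ℤ) (hb : b ≤ -2) (S : ℤ → ℤ) (hS : IsPowSumFun 2 b S)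
    (a : ℤ) (ha : (|b| - 1) * (|b| ^ 2 - |b| + 1) < a) :
    0 < S a ∧ S a < a := by
  have habs : |b| = -b := abs_of_neg (by omega)
  rw [habs] at ha
  have ha1 : 1 ≤ a := by
    have h1 : (1:ℤ) ≤ -b - 1 := by omega
    have h2 : (3:ℤ) ≤ (-b) ^ 2 - (-b) + 1 := by nlinarith
    have h3 := mul_le_mul h1 h2 (by norm_num) (by omega)
    nlinarith
  have hane : a ≠ 0 := by omega
  have hexp : IsDigitExpansion b a (negDigits b a) := by
    refine ⟨fun d hd => ?_, negDigits_ne_nil hb hane, negDigits_getLast hb a hane,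
      baseVal_negDigits hb a⟩
    have := negDigits_mem hb a d hd
    rw [habs]
    omega
  have hSa : S a = sqSum b a := hS.2 a (negDigits b a) hexp
  rw [hSa]
  exact ⟨sqSum_pos hb a hane, claimB hb ha⟩
end

section
/- For b ≤ -2, every fixed point of S_{2,b} is at most (|b|-1)(|b|^2 - |b| + 1), and every cycle of S_{2,b} contains a number at most (|b|-1)(|b|^2 - |b| + 1). -/
lemma my_getLast!_cons (d : ℤ) (L : List ℤ) (h : L ≠ []) :
    (d :: L).getLast! = L.getLast! := by
  cases L with
  | nil => exact absurd rfl h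
  | cons e t => simp [List.getLast!, List.getLast?_cons_cons]

lemma sumSq_le (m : ℤ) (L : List ℤ) (hd : ∀ d ∈ L, 0 ≤ d ∧ d ≤ m - 1) :
    (L.map (· ^ 2)).sum ≤ (L.length : ℤ) * (m - 1) ^ 2 := by
  induction L with
  | nil => simp
  | cons d t ih =>
    have hdd := hd d (by simp)
    have ht := ih (fun x hx => hd x (by simp [hx]))
    have hsq : d ^ 2 ≤ (m - 1) ^ 2 := by nlinarith [hdd.1, hdd.2]
    simp only [List.map_cons, List.sum_cons, List.length_cons]
    push_cast
    linarith

lemma val_bounds (m : ℤ) (hm : 2 ≤ m) :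
    ∀ L : List ℤ, (∀ d ∈ L, 0 ≤ d ∧ d ≤ m - 1) → L ≠ [] → L.getLast! ≠ 0 →
      (Odd L.length → m ^ (L.length - 1) + m ≤ (m + 1) * baseVal (-m) L) ∧
      (Even L.length → (m + 1) * baseVal (-m) L ≤ -(m ^ (L.length - 1) + 1)) := by
  intro L
  induction L with
  | nil => intro _ h; exact absurd rfl h
  | cons d t ih =>
    intro hd _ hlast
    rcases eq_or_ne t [] with rfl | ht
    · have hd0 := hd d (by simp)
      have hdne : d ≠ 0 := by simpa [List.getLast!] using hlast
      have hd1 : 1 ≤ d := lt_of_le_of_ne hd0.1 (Ne.symm hdne)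
      constructor
      · intro _
        show m ^ ([d].length - 1) + m ≤ (m + 1) * baseVal (-m) [d]
        simp only [List.length_singleton]
        simp [baseVal]
        nlinarith
      · intro h
        simp [Nat.even_iff] at h
    · have hlast' : t.getLast! ≠ 0 := by
        rwa [my_getLast!_cons d t ht] at hlast
      have iht := ih (fun x hx => hd x (by simp [hx])) ht hlast'
      have htlen : 1 ≤ t.length := List.length_pos_iff.mpr ht
      have hpow : m ^ t.length = m * m ^ (t.length - 1) := by
        conv_lhs => rw [show t.length = (t.length - 1) + 1 by omega]
        rw [pow_succ]; ring
      have hd0 := hd d (by simp)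
      have hbv : baseVal (-m) (d :: t) = d - m * baseVal (-m) t := by
        simp [baseVal]; ring
      constructor
      · intro hodd
        have heven : Even t.length := by
          simpa only [List.length_cons, Nat.odd_add_one, Nat.not_odd_iff_even] using hodd
        have h2 := iht.2 heven
        simp only [List.length_cons]
        rw [show (t.length + 1) - 1 = t.length from rfl, hbv, hpow]
        nlinarith [hd0.1, mul_le_mul_of_nonneg_left h2 (show (0:ℤ) ≤ m by linarith)]
      · intro heven
        have hodd : Odd t.length := by
          simpa only [List.length_cons, Nat.even_add_one, Nat.not_even_iff_odd] using heven
        have h1 := iht.1 hodd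
        simp only [List.length_cons]
        rw [show (t.length + 1) - 1 = t.length from rfl, hbv, hpow]
        nlinarith [hd0.2, mul_le_mul_of_nonneg_left h1 (show (0:ℤ) ≤ m by linarith)]

lemma pow_gap (m : ℤ) (hm : 2 ≤ m) : ∀ n : ℕ, 5 ≤ n →
    (n : ℤ) * (m - 1) ^ 2 * (m + 1) < m ^ (n - 1) + m := by
  intro n hn
  induction n, hn using Nat.le_induction with
  | base =>
    show (5 : ℕ) * (m - 1) ^ 2 * (m + 1) < m ^ 4 + m
    push_cast
    nlinarith [sq_nonneg (m - 2), sq_nonneg (m - 3), sq_nonneg (m * (m - 4)), sq_nonneg m]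
  | succ n hn ih =>
    have hpow : m ^ ((n + 1) - 1) = m * m ^ (n - 1) := by
      rw [show (n + 1) - 1 = (n - 1) + 1 by omega, pow_succ]; ring
    have hmn : m ^ 2 ≤ m ^ (n - 1) := pow_le_pow_right₀ (by linarith) (by omega)
    rw [hpow]
    push_cast
    push_cast at ih
    nlinarith [hmn]

/-- termination measure -/
def meas (a : ℤ) : ℕ := 2 * a.natAbs + if a < 0 then 1 else 0

lemma meas_cast (a : ℤ) : (meas a : ℤ) = 2 * |a| + if a < 0 then 1 else 0 := by
  simp [meas, Int.natCast_natAbs, apply_ite (fun n : ℕ => (n : ℤ))]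

lemma exists_exp (b : ℤ) (hb : b ≤ -2) :
    ∀ (n : ℕ) (a : ℤ), a ≠ 0 → meas a ≤ n → ∃ L, IsDigitExpansion b a L := by
  intro n
  induction n using Nat.strong_induction_on with
  | _ n ih =>
    intro a ha hma
    set m : ℤ := -b with hmdef
    have hm2 : 2 ≤ m := by omega
    have habs : |b| = m := abs_of_neg (by omega : b < 0)
    have hmpos : 0 < m := by omega
    set r : ℤ := a % m with hrdef
    have hr0 : 0 ≤ r := Int.emod_nonneg a (by omega)
    have hrm : r < m := Int.emod_lt_of_pos a hmpos
    set t : ℤ := a / m with htdef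
    have hart : m * t + r = a := Int.mul_ediv_add_emod a m
    set q : ℤ := -t with hqdef
    have harq : a = r + b * q := by rw [hqdef, hmdef] at *; linarith
    rcases eq_or_ne q 0 with hq0 | hq0
    · have har : a = r := by rw [harq, hq0]; ring
      refine ⟨[r], ?_, by simp, ?_, ?_⟩
      · intro d hdm
        simp at hdm
        subst hdm
        exact ⟨hr0, by omega⟩
      · simp only [List.getLast!]
        simp
        omega
      · simp [baseVal]; omega
    · -- q ≠ 0 : recurse
      have hkey : meas q < meas a := by
        have : (meas q : ℤ) < (meas a : ℤ) := by
          rw [meas_cast, meas_cast]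
          rcases lt_trichotomy a 0 with hneg | hz | hpos
          · -- a < 0 : t ≤ -1, q = -t ≥ 1
            have ht1 : t ≤ -1 := by
              have : t < 0 := Int.ediv_neg_of_neg_of_pos hneg hmpos
              omega
            have hq1 : 1 ≤ q := by omega
            have hat : a ≤ t := by nlinarith
            rw [if_pos hneg, if_neg (by omega : ¬ q < 0),
              abs_of_neg hneg, abs_of_pos (by omega : 0 < q)]
            omega
          · exact absurd hz ha
          · -- a > 0 : t ≥ 1 (since q ≠ 0 and t ≥ 0)
            have ht0 : 0 ≤ t := Int.ediv_nonneg (le_of_lt hpos) (le_of_lt hmpos)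
            have ht1 : 1 ≤ t := by omega
            have h2a : t < a := by nlinarith
            rw [if_neg (by omega : ¬ a < 0), if_pos (by omega : q < 0),
              abs_of_pos hpos, abs_of_neg (by omega : q < 0)]
            omega
        exact_mod_cast this
      obtain ⟨L', hL'⟩ := ih (meas q) (lt_of_lt_of_le hkey hma) q hq0 le_rfl
      obtain ⟨hL'dig, hL'ne, hL'last, hL'val⟩ := hL'
      refine ⟨r :: L', ?_, by simp, ?_, ?_⟩
      · intro d hdm
        rcases List.mem_cons.mp hdm with h | h
        · subst h; exact ⟨hr0, by omega⟩
        · exact hL'dig d h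
      · rwa [my_getLast!_cons r L' hL'ne]
      · show r + b * baseVal b L' = a
        rw [hL'val]; omega

lemma S_decreases (b : ℤ) (hb : b ≤ -2) (S : ℤ → ℤ) (hS : IsPowSumFun 2 b S)
    (a : ℤ) (ha : (|b| - 1) * (|b| ^ 2 - |b| + 1) < a) : S a < a := by
  set m : ℤ := -b with hmdef
  have hm2 : 2 ≤ m := by omega
  have habs : |b| = m := abs_of_neg (by omega : b < 0)
  rw [habs] at ha
  have hB3 : 3 ≤ (m - 1) * (m ^ 2 - m + 1) := by nlinarith
  have hapos : 0 < a := by linarith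
  obtain ⟨L, hL⟩ := exists_exp b hb (meas a) a (by omega) le_rfl
  obtain ⟨hdig, hne, hlast, hval⟩ := hL
  rw [habs] at hdig
  have hbm : b = -m := by omega
  have hvb := val_bounds m hm2 L hdig hne hlast
  rw [← hbm, hval] at hvb
  have hSval : S a = (L.map (· ^ 2)).sum := hS.2 a L ⟨by rw [habs]; exact hdig, hne, hlast, hval⟩
  have hSle : S a ≤ (L.length : ℤ) * (m - 1) ^ 2 := by
    rw [hSval]; exact sumSq_le m L hdig
  have hodd : Odd L.length := by
    rcases Nat.even_or_odd L.length with h | h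
    · exfalso
      have := hvb.2 h
      have hp : 0 < m ^ (L.length - 1) := pow_pos (by omega) _
      nlinarith
    · exact h
  have hlow := hvb.1 hodd
  rcases le_or_gt L.length 3 with h3 | h5
  · have : (L.length : ℤ) ≤ 3 := by exact_mod_cast h3
    have hb3 : 3 * (m - 1) ^ 2 ≤ (m - 1) * (m ^ 2 - m + 1) := by nlinarith [sq_nonneg (m - 2)]
    nlinarith [sq_nonneg (m - 1)]
  · have h5' : 5 ≤ L.length := by
      rw [Nat.odd_iff] at hodd; omega
    have hgap := pow_gap m hm2 L.length h5'
    have : (m + 1) * S a < (m + 1) * a := by nlinarith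
    exact lt_of_mul_lt_mul_left this (by linarith)

theorem fixed_points_and_cycles_bounded (b : ℤ) (hb : b ≤ -2)
    (S : ℤ → ℤ) (hS : IsPowSumFun 2 b S) (a : ℤ) :
    (S a = a → a ≤ (|b| - 1) * (|b| ^ 2 - |b| + 1)) ∧
      (∀ m : ℕ, 1 ≤ m → S^[m] a = a →
        ∃ j : ℕ, S^[j] a ≤ (|b| - 1) * (|b| ^ 2 - |b| + 1)) := by
  constructor
  · intro hfix
    by_contra h
    push_neg at h
    have := S_decreases b hb S hS a h
    omega
  · intro m hm hcyc
    by_contra h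
    push_neg at h
    have hdec : ∀ k : ℕ, S^[k] a ≤ a - k := by
      intro k
      induction k with
      | zero => simp
      | succ k ihk =>
        have h1 : S (S^[k] a) < S^[k] a :=
          S_decreases b hb S hS (S^[k] a) (h k)
        rw [Function.iterate_succ_apply']
        push_cast
        omega
    have := hdec m
    rw [hcyc] at this
    have : (m : ℤ) ≤ 0 := by omega
    omega
end

section
/- The fixed points of S_{2,-2} on the positive integers are exactly 1, 2, and 3, and S_{2,-2} has no cycles of length greater than 1 among positive integers. -/
/-- The base `-2` digit expansion, computed recursively. -/
def negaDigits (a : ℤ) : List ℤ :=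
  if h : a = 0 then [] else (a % 2) :: negaDigits (-(a / 2))
  termination_by (2 * a.natAbs + (if a < 0 then 1 else 0) : ℕ)
  decreasing_by split_ifs <;> omega

lemma getLast!_cons_ne (x : ℤ) (L : List ℤ) (h : L ≠ []) :
    (x :: L).getLast! = L.getLast! := by
  cases L with
  | nil => exact absurd rfl h
  | cons y M => rw [List.getLast!_cons_eq_getLastD, List.getLast!_cons_eq_getLastD, List.getLastD_cons]

lemma negaDigits_spec : ∀ a : ℤ, a ≠ 0 → IsDigitExpansion (-2) a (negaDigits a) := by
  intro a
  induction a using negaDigits.induct with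
  | case1 => intro h'; exact absurd rfl h'
  | case2 a h ih =>
    intro _
    rw [negaDigits, dif_neg h]
    by_cases h2 : -(a / 2) = 0
    · have ha1 : a = 1 := by omega
      subst ha1
      refine ⟨?_, by simp, ?_, ?_⟩
      · intro d hd
        simp [negaDigits, h2] at hd
        have habs : |(-2 : ℤ)| = 2 := by decide
        omega
      · simp [negaDigits, h2, List.getLast!_cons_eq_getLastD]
      · simp [negaDigits, h2, baseVal]
    · obtain ⟨hdig, hne, hlast, hval⟩ := ih h2
      refine ⟨?_, by simp, ?_, ?_⟩
      · intro d hd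
        have habs : |(-2 : ℤ)| = 2 := by decide
        rcases List.mem_cons.mp hd with rfl | hd
        · constructor <;> omega
        · exact hdig d hd
      · rwa [getLast!_cons_ne _ _ hne]
      · simp only [baseVal, hval]; omega

lemma digits01 {L : List ℤ} (h : ∀ d ∈ L, 0 ≤ d ∧ d ≤ |(-2 : ℤ)| - 1) :
    ∀ d ∈ L, d = 0 ∨ d = 1 := by
  intro d hd; have := h d hd; rw [show |(-2 : ℤ)| = 2 by decide] at this; omega

lemma baseVal_bounds (L : List ℤ) (h : ∀ d ∈ L, d = 0 ∨ d = 1) :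
    2 - 2 ^ (L.length + 1) ≤ 3 * baseVal (-2) L ∧
      3 * baseVal (-2) L ≤ 2 ^ (L.length + 1) - 1 := by
  induction L with
  | nil => simp [baseVal]
  | cons d L ih =>
    obtain ⟨h1, h2⟩ := ih (fun x hx => h x (List.mem_cons_of_mem _ hx))
    have hd := h d List.mem_cons_self
    simp only [baseVal, List.length_cons]
    have hp : (2 : ℤ) ^ (L.length + 1 + 1) = 2 * 2 ^ (L.length + 1) := by ring
    rcases hd with rfl | rfl <;> constructor <;> rw [hp] <;> linarith

lemma baseVal_concat (P : List ℤ) (x : ℤ) :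
    baseVal (-2) (P ++ [x]) = baseVal (-2) P + x * (-2) ^ P.length := by
  induction P with
  | nil => simp [baseVal]
  | cons d P ih =>
    simp only [List.cons_append, baseVal, List.length_cons]
    rw [ih]; ring

lemma sum_sq_le (L : List ℤ) (h : ∀ d ∈ L, d = 0 ∨ d = 1) :
    0 ≤ (L.map (· ^ 2)).sum ∧ (L.map (· ^ 2)).sum ≤ (L.length : ℤ) := by
  induction L with
  | nil => simp
  | cons d L ih =>
    obtain ⟨h1, h2⟩ := ih (fun x hx => h x (List.mem_cons_of_mem _ hx))
    have hd := h d List.mem_cons_self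
    simp only [List.map_cons, List.sum_cons, List.length_cons]
    rcases hd with rfl | rfl <;> constructor <;> push_cast <;> nlinarith

/-- Key structural lemma for positive values. -/
lemma key_lemma (L : List ℤ) (hd : ∀ d ∈ L, d = 0 ∨ d = 1) (hne : L ≠ [])
    (hlast : L.getLast! ≠ 0) (hpos : 0 < baseVal (-2) L) :
    L.length % 2 = 1 ∧ 2 ^ (L.length - 1) + 2 ≤ 3 * baseVal (-2) L ∧
      1 ≤ (L.map (· ^ 2)).sum := by
  rcases L.eq_nil_or_concat' with rfl | ⟨P, x, rfl⟩
  · exact absurd rfl hne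
  · have hx : x = 1 := by
      have hgl : (P ++ [x]).getLast! = x :=
        List.getLast!_of_getLast? (List.getLast?_concat (l := P))
      have := hd x (by simp)
      rcases this with rfl | rfl
      · rw [hgl] at hlast; exact absurd rfl hlast
      · rfl
    subst hx
    have hP : ∀ d ∈ P, d = 0 ∨ d = 1 := fun d hdp => hd d (by simp [hdp])
    obtain ⟨hlo, hhi⟩ := baseVal_bounds P hP
    have hv := baseVal_concat P 1
    rcases Nat.even_or_odd P.length with he | ho
    · have hpow : (-2 : ℤ) ^ P.length = 2 ^ P.length := he.neg_pow 2
      have hlen : (P ++ [(1 : ℤ)]).length = P.length + 1 := by simp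
      obtain ⟨k, hk⟩ := he
      refine ⟨by omega, ?_, ?_⟩
      · rw [hlen]
        simp only [Nat.add_sub_cancel]
        rw [hv, hpow]
        have h2 : (2 : ℤ) ^ (P.length + 1) = 2 * 2 ^ P.length := by ring
        nlinarith [pow_pos (show (0:ℤ) < 2 by norm_num) P.length]
      · obtain ⟨hs0, _⟩ := sum_sq_le P hP
        rw [List.map_append, List.sum_append]
        simp only [List.map_cons, List.map_nil, List.sum_cons, List.sum_nil]
        linarith
    · exfalso
      have hpow : (-2 : ℤ) ^ P.length = -(2 ^ P.length) := ho.neg_pow 2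
      rw [hv, hpow] at hpos
      have h2 : (2 : ℤ) ^ (P.length + 1) = 2 * 2 ^ P.length := by ring
      nlinarith [pow_pos (show (0:ℤ) < 2 by norm_num) P.length]

lemma three_lt (n : ℕ) (h : 5 ≤ n) : (3 * n : ℤ) < 2 ^ (n - 1) + 2 := by
  induction n, h using Nat.le_induction with
  | base => norm_num
  | succ k hk ih =>
    have h1 : k + 1 - 1 = (k - 1) + 1 := by omega
    rw [h1, pow_succ]
    have h4 : (4 : ℤ) ≤ 2 ^ (k - 1) := by
      calc (4 : ℤ) = 2 ^ 2 := by norm_num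
      _ ≤ 2 ^ (k - 1) := pow_le_pow_right₀ (by norm_num) (by omega)
    push_cast at *
    linarith

lemma S_pos_of_pos {S : ℤ → ℤ} (hS : IsPowSumFun 2 (-2) S) {a : ℤ} (ha : 0 < a) :
    1 ≤ S a := by
  obtain ⟨hdig, hne, hlast, hval⟩ := negaDigits_spec a (by omega)
  rw [hS.2 a _ ⟨hdig, hne, hlast, hval⟩]
  exact (key_lemma _ (digits01 hdig) hne hlast (by rw [hval]; exact ha)).2.2

lemma S_lt_of_big {S : ℤ → ℤ} (hS : IsPowSumFun 2 (-2) S) {a : ℤ} (ha : 6 ≤ a) :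
    S a < a := by
  obtain ⟨hdig, hne, hlast, hval⟩ := negaDigits_spec a (by omega)
  set L := negaDigits a with hL
  rw [hS.2 a _ ⟨hdig, hne, hlast, hval⟩]
  have h01 := digits01 hdig
  obtain ⟨hodd, hlow, _⟩ := key_lemma L h01 hne hlast (by rw [hval]; omega)
  obtain ⟨_, hhi⟩ := baseVal_bounds L h01
  obtain ⟨_, hsum⟩ := sum_sq_le L h01
  -- L.length is odd; if L.length ≤ 3 then a ≤ 5, contradiction
  have hlen5 : 5 ≤ L.length := by
    by_contra hc
    push_neg at hc
    have : L.length ≤ 3 := by omega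
    have : (2 : ℤ) ^ (L.length + 1) ≤ 2 ^ 4 :=
      pow_le_pow_right₀ (by norm_num) (by omega)
    rw [hval] at hhi
    norm_num at this
    omega
  have h3 := three_lt L.length hlen5
  rw [hval] at hlow
  calc (L.map (· ^ 2)).sum ≤ (L.length : ℤ) := hsum
    _ < a := by
      have : (3 : ℤ) * L.length < 3 * a := lt_of_lt_of_le h3 hlow
      omega

lemma S_small {S : ℤ → ℤ} (hS : IsPowSumFun 2 (-2) S) :
    S 1 = 1 ∧ S 2 = 2 ∧ S 3 = 3 ∧ S 4 = 1 ∧ S 5 = 2 := by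
  refine ⟨?_, ?_, ?_, ?_, ?_⟩
  · rw [hS.2 1 [1] ?_] <;> norm_num [IsDigitExpansion, baseVal] <;> decide
  · rw [hS.2 2 [0, 1, 1] ?_] <;> norm_num [IsDigitExpansion, baseVal] <;> decide
  · rw [hS.2 3 [1, 1, 1] ?_] <;> norm_num [IsDigitExpansion, baseVal] <;> decide
  · rw [hS.2 4 [0, 0, 1] ?_] <;> norm_num [IsDigitExpansion, baseVal] <;> decide
  · rw [hS.2 5 [1, 0, 1] ?_] <;> norm_num [IsDigitExpansion, baseVal] <;> decide

lemma S_le_self {S : ℤ → ℤ} (hS : IsPowSumFun 2 (-2) S) {a : ℤ} (ha : 0 < a) :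
    S a ≤ a := by
  obtain ⟨h1, h2, h3, h4, h5⟩ := S_small hS
  rcases lt_or_ge a 6 with h | h
  · interval_cases a <;> omega
  · exact le_of_lt (S_lt_of_big hS h)

lemma S_ne_of_big {S : ℤ → ℤ} (hS : IsPowSumFun 2 (-2) S) {a : ℤ} (ha : 4 ≤ a) :
    S a ≠ a := by
  obtain ⟨h1, h2, h3, h4, h5⟩ := S_small hS
  rcases lt_or_ge a 6 with h | h
  · interval_cases a <;> omega
  · exact ne_of_lt (S_lt_of_big hS h)

theorem fixed_points_base_neg_two (S : ℤ → ℤ) (hS : IsPowSumFun 2 (-2) S) :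
    (∀ a : ℤ, 0 < a → (S a = a ↔ a = 1 ∨ a = 2 ∨ a = 3)) ∧
      (∀ a : ℤ, 0 < a → ∀ m : ℕ, 1 ≤ m → S^[m] a = a → S a = a) := by
  obtain ⟨h1, h2, h3, h4, h5⟩ := S_small hS
  constructor
  · intro a ha
    constructor
    · intro hfix
      by_contra hc
      push_neg at hc
      have ha4 : 4 ≤ a := by omega
      exact S_ne_of_big hS ha4 hfix
    · rintro (rfl | rfl | rfl) <;> assumption
  · intro a ha m hm hcyc
    have hpos : ∀ k : ℕ, 0 < S^[k] a := by
      intro k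
      induction k with
      | zero => simpa using ha
      | succ n ih =>
        rw [Function.iterate_succ_apply']
        have := S_pos_of_pos hS ih
        omega
    have hdec : ∀ k : ℕ, 1 ≤ k → S^[k] a ≤ S a := by
      intro k hk
      induction k with
      | zero => omega
      | succ n ih =>
        rcases Nat.eq_or_lt_of_le hk with h | h
        · simp [← h]
        · have hn : 1 ≤ n := by omega
          rw [Function.iterate_succ_apply']
          exact le_trans (S_le_self hS (hpos n)) (ih hn)
    have h1' : a ≤ S a := by have := hdec m hm; rwa [hcyc] at this
    have h2' : S a ≤ a := S_le_self hS ha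
    omega
end

section
/- The positive fixed points of S_{2,-5} are exactly 1, 10, and 11. -/
def dg (a : ℤ) : List ℤ :=
  if a = 0 then [] else (a % 5) :: dg (-(a / 5))
termination_by (2 * a.natAbs + (if a < 0 then 1 else 0) : ℕ)
decreasing_by
  split <;> split <;> omega

lemma getLast!_append_singleton (L : List ℤ) (d : ℤ) : (L ++ [d]).getLast! = d :=
  List.getLast!_of_getLast? (by simp [List.getLast?_concat])

lemma getLast!_cons_of_ne_nil (L : List ℤ) (d : ℤ) (h : L ≠ []) :
    (d :: L).getLast! = L.getLast! := by
  obtain ⟨M, e, rfl⟩ := (List.eq_nil_or_concat L).resolve_left h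
  simp only [List.concat_eq_append, ← List.cons_append]
  rw [List.getLast!_of_getLast? List.getLast?_concat,
      List.getLast!_of_getLast? List.getLast?_concat]

lemma dg_mem : ∀ a : ℤ, ∀ d ∈ dg a, 0 ≤ d ∧ d ≤ 4 := by
  intro a
  induction a using dg.induct with
  | case1 => rw [dg]; simp
  | case2 a h ih =>
    rw [dg]; simp only [if_neg h, List.mem_cons]
    rintro d (rfl | hd)
    · omega
    · exact ih d hd

lemma dg_baseVal : ∀ a : ℤ, baseVal (-5) (dg a) = a := by
  intro a
  induction a using dg.induct with
  | case1 => rw [dg]; simp [baseVal]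
  | case2 a h ih => rw [dg]; simp only [if_neg h, baseVal, ih]; omega

lemma dg_ne_nil (a : ℤ) (h : a ≠ 0) : dg a ≠ [] := by
  rw [dg]; simp [h]

lemma dg_last : ∀ a : ℤ, a ≠ 0 → (dg a).getLast! ≠ 0 := by
  intro a
  induction a using dg.induct with
  | case1 => intro h; exact absurd rfl h
  | case2 a h ih =>
    intro _
    rw [dg, if_neg h]
    by_cases h2 : -(a / 5) = 0
    · rw [h2, dg, if_pos rfl]
      have hne : a % 5 ≠ 0 := by omega
      simpa [List.getLast!_cons_eq_getLastD] using hne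
    · rw [getLast!_cons_of_ne_nil _ _ (dg_ne_nil _ h2)]
      exact ih h2

lemma baseVal_append (b : ℤ) : ∀ M : List ℤ, ∀ d : ℤ,
    baseVal b (M ++ [d]) = baseVal b M + d * b ^ M.length := by
  intro M
  induction M with
  | nil => intro d; simp [baseVal]
  | cons x M ih => intro d; simp [baseVal, ih]; ring

lemma baseVal_bnd : ∀ M : List ℤ, (∀ d ∈ M, 0 ≤ d ∧ d ≤ 4) →
    -(5 ^ (M.length + 1)) + 5 ≤ 6 * baseVal (-5) M ∧
    6 * baseVal (-5) M ≤ 5 ^ (M.length + 1) - 1 := by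
  intro M
  induction M with
  | nil => intro _; simp [baseVal]
  | cons x M ih =>
    intro h
    obtain ⟨hx1, hx2⟩ := h x (by simp)
    obtain ⟨h1, h2⟩ := ih (fun d hd => h d (List.mem_cons_of_mem _ hd))
    simp only [baseVal, List.length_cons]
    rw [pow_succ (5 : ℤ) (M.length + 1)]
    constructor <;> nlinarith

lemma sumsq_bnd : ∀ M : List ℤ, (∀ d ∈ M, 0 ≤ d ∧ d ≤ 4) →
    (M.map (· ^ 2)).sum ≤ 16 * (M.length : ℤ) := by
  intro M
  induction M with
  | nil => intro _; simp
  | cons x M ih =>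
    intro h
    obtain ⟨hx1, hx2⟩ := h x (by simp)
    have hM := ih (fun d hd => h d (List.mem_cons_of_mem _ hd))
    have hx : x ^ 2 ≤ 16 := by nlinarith
    simp only [List.map_cons, List.sum_cons, List.length_cons]
    push_cast
    linarith

lemma pow_growth : ∀ k : ℕ, 4 ≤ k → 96 * ((k : ℤ) + 1) < 5 ^ k + 5 := by
  intro k hk
  induction k, hk using Nat.le_induction with
  | base => norm_num
  | succ n hn ih =>
    have h5 : (0:ℤ) < 5 ^ n := by positivity
    rw [pow_succ]
    push_cast at *
    nlinarith

lemma key : ∀ (M : List ℤ) (d a : ℤ), (∀ x ∈ M, 0 ≤ x ∧ x ≤ 4) →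
    1 ≤ d → d ≤ 4 → 0 < a → baseVal (-5) (M ++ [d]) = a →
    ((M ++ [d]).map (· ^ 2)).sum = a → a = 1 ∨ a = 10 ∨ a = 11 := by
  intro M d a hM hd1 hd2 hpos hval hsum
  rw [baseVal_append] at hval
  simp only [List.map_append, List.sum_append, List.map_cons, List.map_nil,
    List.sum_cons, List.sum_nil, add_zero] at hsum
  match M with
  | [] =>
    simp only [baseVal, List.length_nil, pow_zero, mul_one, zero_add] at hval
    subst hval
    simp only [List.map_nil, List.sum_nil, zero_add] at hsum
    interval_cases d <;> revert hsum <;> decide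
  | [d0] =>
    obtain ⟨h01, h02⟩ := hM d0 (by simp)
    simp only [baseVal, List.length_cons, List.length_nil, mul_zero, add_zero] at hval
    have hp : ((-5:ℤ)) ^ (0 + 1) = -5 := by norm_num
    rw [hp] at hval
    exfalso
    nlinarith
  | [d0, d1] =>
    obtain ⟨h01, h02⟩ := hM d0 (by simp)
    obtain ⟨h11, h12⟩ := hM d1 (by simp)
    simp only [baseVal, List.length_cons, List.length_nil, mul_zero, add_zero,
      List.map_cons, List.map_nil, List.sum_cons, List.sum_nil] at hval hsum
    have hp : ((-5:ℤ)) ^ (0 + 1 + 1) = 25 := by norm_num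
    rw [hp] at hval
    subst hval
    interval_cases d0 <;> interval_cases d1 <;> interval_cases d <;>
      revert hsum hpos <;> decide
  | d0 :: d1 :: d2 :: M' =>
    exfalso
    set N : List ℤ := d0 :: d1 :: d2 :: M' with hN
    have hk : 3 ≤ N.length := by simp [hN]
    obtain ⟨hb1, hb2⟩ := baseVal_bnd N hM
    have hs := sumsq_bnd N hM
    have h5 : (0:ℤ) < 5 ^ N.length := by positivity
    have hpow : (5:ℤ) ^ (N.length + 1) = 5 * 5 ^ N.length := by rw [pow_succ]; ring
    rw [hpow] at hb1 hb2
    have hdmul : 1 * 5 ^ N.length ≤ d * 5 ^ N.length :=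
      mul_le_mul_of_nonneg_right hd1 (le_of_lt h5)
    rcases Nat.even_or_odd N.length with he | ho
    · rw [he.neg_pow] at hval
      have hk4 : 4 ≤ N.length := by
        rcases he with ⟨m, hm⟩; omega
      have hg := pow_growth N.length hk4
      have hdsq : d ^ 2 ≤ 16 := by nlinarith
      have h6a : 5 ^ N.length + 5 ≤ 6 * a := by nlinarith
      have h6b : 6 * a ≤ 96 * ((N.length : ℤ) + 1) := by nlinarith
      linarith
    · rw [ho.neg_pow] at hval
      nlinarith

theorem fixed_points_base_neg_five (S : ℤ → ℤ) (hS : IsPowSumFun 2 (-5) S) :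
    ∀ a : ℤ, 0 < a → (S a = a ↔ a = 1 ∨ a = 10 ∨ a = 11) := by
  intro a ha
  constructor
  · intro hfix
    have hne : a ≠ 0 := ha.ne'
    have hexp : IsDigitExpansion (-5) a (dg a) := by
      refine ⟨fun d hd => ?_, dg_ne_nil a hne, dg_last a hne, dg_baseVal a⟩
      have h4 := dg_mem a d hd
      have habs : |(-5:ℤ)| - 1 = 4 := by norm_num
      exact ⟨h4.1, by rw [habs]; exact h4.2⟩
    have hsum := hS.2 a (dg a) hexp
    obtain ⟨M, d, hMd⟩ := (List.eq_nil_or_concat (dg a)).resolve_left (dg_ne_nil a hne)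
    rw [List.concat_eq_append] at hMd
    have hdlast : d ≠ 0 := by
      have := dg_last a hne
      rwa [hMd, getLast!_append_singleton] at this
    have hdmem : d ∈ dg a := by rw [hMd]; simp
    have hdb := dg_mem a d hdmem
    refine key M d a (fun x hx => dg_mem a x (by rw [hMd]; exact List.mem_append_left _ hx))
      (by omega) hdb.2 ha ?_ ?_
    · rw [← hMd]; exact dg_baseVal a
    · rw [← hMd, ← hsum, hfix]
  · intro h
    have e1 : IsDigitExpansion (-5) 1 [1] := by
      refine ⟨?_, by simp, ?_, by simp [baseVal]⟩ <;> decide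
    have e10 : IsDigitExpansion (-5) 10 [0, 3, 1] := by
      refine ⟨?_, by simp, ?_, by norm_num [baseVal]⟩ <;> decide
    have e11 : IsDigitExpansion (-5) 11 [1, 3, 1] := by
      refine ⟨?_, by simp, ?_, by norm_num [baseVal]⟩ <;> decide
    rcases h with rfl | rfl | rfl
    · rw [hS.2 1 [1] e1]; decide
    · rw [hS.2 10 [0,3,1] e10]; decide
    · rw [hS.2 11 [1,3,1] e11]; decide
end

section
/- For b ≤ -2 and any nonzero integer a, there exists k ≥ 1 such that S_{2,b}^k(a) lies in U_{2,b} = {u ∈ ℤ^+ : S_{2,b}^m(u) = u for some m ≥ 1}; i.e., every nonzero integer eventually enters a cycle under iteration of S_{2,b}. -/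
private lemma getLast!_cons' (d : ℤ) {L : List ℤ} (h : L ≠ []) :
    (d :: L).getLast! = L.getLast! := by
  cases L with
  | nil => simp at h
  | cons y t => simp [List.getLast!, List.getLast]

/-- Every nonzero integer has a base-b expansion, of controlled length. -/
private lemma exists_expansion (b : ℤ) (hb : b ≤ -2) :
    ∀ n : ℕ, ∀ a : ℤ, a ≠ 0 → |a| ≤ (-b) ^ n →
      ∃ L, IsDigitExpansion b a L ∧ L.length ≤ n + 2 := by
  have habs : |b| = -b := abs_of_neg (by omega)
  have hB : (0:ℤ) < -b := by omega
  intro n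
  induction n with
  | zero =>
    intro a ha h
    simp only [pow_zero] at h
    obtain ⟨hab1, hab2⟩ := abs_le.mp h
    interval_cases a
    · -- a = -1
      refine ⟨[-b - 1, 1], ⟨?_, by simp, ?_, ?_⟩, by simp⟩
      · intro d hd
        simp at hd
        rcases hd with h | h <;> simp [h, habs] <;> omega
      · simp [List.getLast!, List.getLast]
      · simp [baseVal]; ring
    · omega
    · -- a = 1
      refine ⟨[1], ⟨?_, by simp, ?_, ?_⟩, by simp⟩
      · intro d hd; simp at hd; simp [hd, habs]; omega
      · simp [List.getLast!, List.getLast]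
      · simp [baseVal]
  | succ n ih =>
    intro a ha h
    set B := -b with hBdef
    set d := a % B with hd
    set q := a / B with hq
    have hdm : B * q + d = a := Int.mul_ediv_add_emod a B
    have hd0 : 0 ≤ d := Int.emod_nonneg a (by omega)
    have hd1 : d ≤ B - 1 := by have := Int.emod_lt_of_pos a hB; omega
    have hval : a = d + b * (-q) := by rw [hBdef] at hdm; linarith
    have hBn : (0:ℤ) < B ^ n := pow_pos hB n
    have hqb : |(-q)| ≤ B ^ n := by
      rw [abs_le] at h ⊢
      rw [pow_succ] at h
      constructor
      · -- -B^n ≤ -q, i.e. q ≤ B^n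
        have h1 : B * q ≤ B ^ n * B := by omega
        nlinarith
      · -- -q ≤ B^n, i.e. -B^n ≤ q
        have h1 : -(B ^ n * B) ≤ B * q + B - 1 := by omega
        nlinarith
    by_cases hq0 : -q = 0
    · -- a = d, single digit
      rw [hq0, mul_zero, add_zero] at hval
      have had : a = d := hval
      refine ⟨[d], ⟨?_, by simp, ?_, ?_⟩, by simp⟩
      · intro x hx; simp at hx; simp [hx, habs]; omega
      · simp [List.getLast!, List.getLast]; omega
      · simp [baseVal]; omega
    · obtain ⟨L', ⟨hdig, hne, hlast, hbv⟩, hlen⟩ := ih (-q) hq0 hqb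
      refine ⟨d :: L', ⟨?_, by simp, ?_, ?_⟩, ?_⟩
      · intro x hx
        rcases List.mem_cons.mp hx with h | h
        · subst h; constructor; exact hd0; rw [habs]; omega
        · exact hdig x h
      · rw [getLast!_cons' d hne]; exact hlast
      · simp only [baseVal, hbv]; omega
      · simp; omega

/-- Positivity and size bound for S. -/
private lemma S_bounds (b : ℤ) (hb : b ≤ -2) (S : ℤ → ℤ) (hS : IsPowSumFun 2 b S) :
    ∀ n : ℕ, ∀ a : ℤ, a ≠ 0 → |a| ≤ (-b) ^ n →
      1 ≤ S a ∧ S a ≤ ((n : ℤ) + 2) * (-b - 1) ^ 2 := by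
  intro n a ha h
  obtain ⟨L, hL, hlen⟩ := exists_expansion b hb n a ha h
  have hsum := hS.2 a L hL
  obtain ⟨hdig, hne, hlast, _⟩ := hL
  have habs : |b| = -b := abs_of_neg (by omega)
  have hnn : ∀ x ∈ L.map (· ^ 2), 0 ≤ x := by
    intro x hx
    obtain ⟨y, _, rfl⟩ := List.mem_map.mp hx
    positivity
  constructor
  · -- positivity: the last digit is nonzero
    have hmem : L.getLast! ∈ L := by
      cases L with
      | nil => simp at hne
      | cons y t =>
        have : (y :: t).getLast! = (y :: t).getLast (by simp) := by
          simp [List.getLast!, List.getLast?_eq_getLast]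
        rw [this]; exact List.getLast_mem _
    have hmem2 : L.getLast! ^ 2 ∈ L.map (· ^ 2) := List.mem_map_of_mem hmem
    have h1 : (1:ℤ) ≤ L.getLast! ^ 2 := by
      rcases lt_or_gt_of_ne hlast with h' | h' <;> nlinarith
    have := List.single_le_sum hnn _ hmem2
    omega
  · have hbd : ∀ x ∈ L.map (· ^ 2), x ≤ (-b - 1) ^ 2 := by
      intro x hx
      obtain ⟨y, hy, rfl⟩ := List.mem_map.mp hx
      obtain ⟨h0, h1⟩ := hdig y hy
      rw [habs] at h1
      nlinarith
    have := List.sum_le_card_nsmul _ _ hbd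
    rw [hsum]
    have hlen2 : (L.map (· ^ 2)).length = L.length := List.length_map _
    rw [hlen2] at this
    have hc : (0:ℤ) ≤ (-b - 1) ^ 2 := by positivity
    calc (L.map (· ^ 2)).sum ≤ L.length • ((-b - 1) ^ 2) := this
      _ = (L.length : ℤ) * (-b - 1) ^ 2 := nsmul_eq_mul _ _
      _ ≤ ((n : ℤ) + 2) * (-b - 1) ^ 2 := by
          apply mul_le_mul_of_nonneg_right _ hc
          exact_mod_cast hlen

private lemma S_pos (b : ℤ) (hb : b ≤ -2) (S : ℤ → ℤ) (hS : IsPowSumFun 2 b S)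
    (a : ℤ) (ha : a ≠ 0) : 1 ≤ S a := by
  have h2 : (2:ℤ) ≤ -b := by omega
  have h : |a| ≤ (-b) ^ a.natAbs := by
    have h1 : (a.natAbs : ℤ) < 2 ^ a.natAbs := by exact_mod_cast Nat.lt_two_pow_self
    have h2' : (2:ℤ) ^ a.natAbs ≤ (-b) ^ a.natAbs := pow_le_pow_left₀ (by norm_num) h2 _
    rw [Int.abs_eq_natAbs]
    omega
  exact (S_bounds b hb S hS a.natAbs a ha h).1

private lemma aux_growth (B : ℤ) (hB : 2 ≤ B) :
    ∀ m : ℕ, ((m : ℤ) + 8) * (B - 1) ^ 2 < B ^ (m + 5) := by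
  intro m
  induction m with
  | zero =>
    have h3 : (2:ℤ) ^ 3 ≤ B ^ 3 := pow_le_pow_left₀ (by norm_num) hB 3
    have h4 : (B - 1) ^ 2 < B ^ 2 := by nlinarith
    have h5 : (8:ℤ) * B ^ 2 ≤ B ^ 3 * B ^ 2 := by nlinarith [sq_nonneg B]
    have h6 : B ^ 5 = B ^ 3 * B ^ 2 := by ring
    push_cast
    nlinarith [sq_nonneg (B - 1)]
  | succ m ih =>
    have hp : (B:ℤ) ^ (m + 6) = B * B ^ (m + 5) := by ring
    have hsq : (B - 1) ^ 2 ≤ B ^ (m + 5) := by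
      calc (B - 1) ^ 2 ≤ B ^ 2 := by nlinarith
        _ ≤ B ^ (m + 5) := pow_le_pow_right₀ (by omega) (by omega)
    have hpos : (0:ℤ) < B ^ (m + 5) := pow_pos (by omega) _
    push_cast
    push_cast at ih
    nlinarith

/-- The crucial decrease: S x < x for x ≥ B^5. -/
private lemma S_lt_self (b : ℤ) (hb : b ≤ -2) (S : ℤ → ℤ) (hS : IsPowSumFun 2 b S)
    (x : ℤ) (hx : (-b) ^ 5 ≤ x) : S x < x := by
  have hB : (2:ℤ) ≤ -b := by omega
  have hB5 : (0:ℤ) < (-b) ^ 5 := pow_pos (by omega) _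
  have hx0 : 0 < x := lt_of_lt_of_le hB5 hx
  have hBt : 2 ≤ (-b).toNat := by omega
  have hxt : x.toNat ≠ 0 := by omega
  have hcast : (((-b).toNat : ℤ)) = -b := Int.toNat_of_nonneg (by omega)
  obtain ⟨n, hlow, hhigh⟩ : ∃ n : ℕ, (-b) ^ n ≤ x ∧ x < (-b) ^ (n + 1) := by
    refine ⟨Nat.log (-b).toNat x.toNat, ?_, ?_⟩
    · have h := Nat.pow_log_le_self (-b).toNat hxt
      have h2 : (((-b).toNat ^ Nat.log (-b).toNat x.toNat : ℕ) : ℤ) ≤ ((x.toNat : ℕ) : ℤ) := by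
        exact_mod_cast h
      push_cast at h2
      rw [hcast] at h2
      omega
    · have h := Nat.lt_pow_succ_log_self (by omega : 1 < (-b).toNat) x.toNat
      have h2 : ((x.toNat : ℕ) : ℤ) < (((-b).toNat ^ (Nat.log (-b).toNat x.toNat + 1) : ℕ) : ℤ) := by
        exact_mod_cast h
      push_cast at h2
      rw [hcast] at h2
      omega
  have hn5 : 5 ≤ n := by
    by_contra hc
    push_neg at hc
    have : (-b) ^ (n + 1) ≤ (-b) ^ 5 := pow_le_pow_right₀ (by omega) (by omega)
    omega
  have hSb := (S_bounds b hb S hS (n + 1) x (by omega) (by rw [abs_of_pos hx0]; exact le_of_lt hhigh)).2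
  -- S x ≤ (n + 3) * (B - 1)^2 < B^n ≤ x
  obtain ⟨m, rfl⟩ : ∃ m : ℕ, n = m + 5 := ⟨n - 5, by omega⟩
  clear hn5
  have hg := aux_growth (-b) hB m
  have hSb' : S x ≤ ((m:ℤ) + 8) * (-b - 1) ^ 2 := by
    push_cast at hSb ⊢
    linarith
  calc S x ≤ ((m:ℤ) + 8) * (-b - 1) ^ 2 := hSb'
    _ < (-b) ^ (m + 5) := hg
    _ ≤ x := hlow

theorem eventually_enters_cycle (b : ℤ) (hb : b ≤ -2)
    (S : ℤ → ℤ) (hS : IsPowSumFun 2 b S) (a : ℤ) (ha : a ≠ 0) :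
    ∃ k : ℕ, 1 ≤ k ∧ 0 < S^[k] a ∧ ∃ m : ℕ, 1 ≤ m ∧ S^[m] (S^[k] a) = S^[k] a := by
  have hB : (2:ℤ) ≤ -b := by omega
  set M : ℤ := max ((-b) ^ 5) (7 * (-b - 1) ^ 2) with hM
  have hB5 : (0:ℤ) < (-b) ^ 5 := pow_pos (by omega) _
  have hM0 : 0 < M := lt_of_lt_of_le hB5 (le_max_left _ _)
  -- invariance of [1, M]
  have hinv : ∀ y : ℤ, 1 ≤ y → y ≤ M → 1 ≤ S y ∧ S y ≤ M := by
    intro y h1 h2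
    have hy0 : y ≠ 0 := by omega
    refine ⟨S_pos b hb S hS y hy0, ?_⟩
    by_cases hc : (-b) ^ 5 ≤ y
    · have h3 := S_lt_self b hb S hS y hc
      have h4 : (-b) ^ 5 ≤ M := le_max_left _ _
      omega
    · push_neg at hc
      have hbd := (S_bounds b hb S hS 5 y hy0 (by rw [abs_of_pos (by omega)]; omega)).2
      have h5 : (((5:ℕ):ℤ) + 2) * (-b - 1) ^ 2 = 7 * (-b - 1) ^ 2 := by norm_num
      rw [h5] at hbd
      exact le_trans hbd (le_max_right _ _)
  -- descent into [1, M]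
  have hdesc : ∀ N : ℕ, ∀ x : ℤ, 0 < x → x.toNat ≤ N →
      ∃ j : ℕ, 1 ≤ S^[j] x ∧ S^[j] x ≤ M := by
    intro N
    induction N with
    | zero => intro x hx hxN; omega
    | succ N ih =>
      intro x hx hxN
      by_cases hc : x ≤ M
      · exact ⟨0, by simp only [Function.iterate_zero, id_eq]; omega, by simpa using hc⟩
      · push_neg at hc
        have hx5 : (-b) ^ 5 ≤ x := le_trans (le_max_left _ _) (le_of_lt hc)
        have hlt := S_lt_self b hb S hS x hx5
        have hSp := S_pos b hb S hS x (by omega)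
        obtain ⟨j, hj1, hj2⟩ := ih (S x) (by omega) (by omega)
        exact ⟨j + 1, by rwa [Function.iterate_succ_apply], by rwa [Function.iterate_succ_apply]⟩
  -- enter positive territory: S a ≥ 1
  have h1 := S_pos b hb S hS a ha
  obtain ⟨j, hj1, hj2⟩ := hdesc (S a).toNat (S a) (by omega) le_rfl
  set k₀ := j + 1 with hk₀
  have hx : S^[k₀] a = S^[j] (S a) := by
    rw [hk₀, Function.iterate_add_apply]; simp
  set x := S^[k₀] a with hxdef
  have hx1 : 1 ≤ x := by rw [hx]; exact hj1
  have hx2 : x ≤ M := by rw [hx]; exact hj2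
  -- orbit of x stays in [1, M]
  have horb : ∀ i : ℕ, 1 ≤ S^[i] x ∧ S^[i] x ≤ M := by
    intro i
    induction i with
    | zero => exact ⟨hx1, hx2⟩
    | succ i ih =>
      rw [Function.iterate_succ_apply']
      exact hinv _ ih.1 ih.2
  -- pigeonhole
  have hcard : (Finset.Icc (1:ℤ) M).card < (Finset.range (M.toNat + 1)).card := by
    rw [Int.card_Icc, Finset.card_range]
    omega
  obtain ⟨i, -, j', -, hne, heq⟩ :=
    Finset.exists_ne_map_eq_of_card_lt_of_maps_to hcard
      (f := fun i => S^[i] x)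
      (fun i _ => Finset.mem_Icc.mpr ⟨(horb i).1, (horb i).2⟩)
  -- wlog i < j'
  rcases Ne.lt_or_gt hne with hlt | hlt
  case _ =>
    refine ⟨k₀ + i, by omega, ?_, j' - i, by omega, ?_⟩
    · have : S^[k₀ + i] a = S^[i] x := by
        rw [add_comm, Function.iterate_add_apply]
      rw [this]; have := (horb i).1; omega
    · have h1 : S^[k₀ + i] a = S^[i] x := by rw [add_comm, Function.iterate_add_apply]
      rw [h1, ← Function.iterate_add_apply]
      have : j' - i + i = j' := by omega
      rw [this, heq]
  case _ =>
    refine ⟨k₀ + j', by omega, ?_, i - j', by omega, ?_⟩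
    · have : S^[k₀ + j'] a = S^[j'] x := by rw [add_comm, Function.iterate_add_apply]
      rw [this]; have := (horb j').1; omega
    · have h1 : S^[k₀ + j'] a = S^[j'] x := by rw [add_comm, Function.iterate_add_apply]
      rw [h1, ← Function.iterate_add_apply]
      have : i - j' + j' = i := by omega
      rw [this, heq]
end

section
/- A positive integer a is −2-happy (i.e., S_{2,-2}^k(a) = 1 for some k ≥ 1) if and only if a ≡ 1 (mod 3). -/
/-- Base -2 digit expansion. -/
def negTwoDigits (a : ℤ) : List ℤ :=
  if a = 0 then [] else (a % 2) :: negTwoDigits ((a % 2 - a) / 2)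
termination_by 2 * a.natAbs + (if a < 0 then 1 else 0)
decreasing_by
  simp_wf
  split_ifs <;> omega

lemma negTwoDigits_zero : negTwoDigits 0 = [] := by
  rw [negTwoDigits]; simp

lemma negTwoDigits_mem : ∀ a : ℤ, ∀ d ∈ negTwoDigits a, d = 0 ∨ d = 1 := by
  intro a
  induction a using negTwoDigits.induct with
  | case1 => rw [negTwoDigits_zero]; simp
  | case2 a h ih =>
    rw [negTwoDigits, if_neg h]
    intro d hd
    rcases List.mem_cons.1 hd with h' | h'
    · omega
    · exact ih d h'

lemma negTwoDigits_baseVal : ∀ a : ℤ, baseVal (-2) (negTwoDigits a) = a := by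
  intro a
  induction a using negTwoDigits.induct with
  | case1 => rw [negTwoDigits_zero, baseVal]
  | case2 a h ih => rw [negTwoDigits, if_neg h, baseVal, ih]; omega

lemma negTwoDigits_getLastD : ∀ a : ℤ, a ≠ 0 → ∀ x : ℤ, (negTwoDigits a).getLastD x = 1 := by
  intro a
  induction a using negTwoDigits.induct with
  | case1 => intro h'; exact absurd rfl h'
  | case2 a h ih =>
    intro _ x
    rw [negTwoDigits, if_neg h, List.getLastD_cons]
    by_cases hq : (a % 2 - a) / 2 = 0
    · rw [hq, negTwoDigits_zero, List.getLastD_nil]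
      omega
    · exact ih hq _

lemma negTwoDigits_sum : ∀ a : ℤ,
    (0 ≤ a → (negTwoDigits a).sum ≤ a) ∧
    (a = -1 → (negTwoDigits a).sum ≤ -2 * a) ∧
    (a ≤ -2 → (negTwoDigits a).sum ≤ -2 * a - 2) ∧
    (a ≠ 0 → 1 ≤ (negTwoDigits a).sum) ∧
    (negTwoDigits a).sum % 3 = a % 3 := by
  intro a
  induction a using negTwoDigits.induct with
  | case1 => rw [negTwoDigits_zero]; simp
  | case2 a h ih =>
    rw [negTwoDigits, if_neg h, List.sum_cons]
    obtain ⟨i1, i2, i3, i4, i5⟩ := ih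
    by_cases hq0 : (a % 2 - a) / 2 = 0
    · rw [hq0, negTwoDigits_zero, List.sum_nil]
      omega
    · have i4' := i4 hq0
      by_cases hqn : 0 ≤ (a % 2 - a) / 2
      · have := i1 hqn
        omega
      · by_cases hq1 : (a % 2 - a) / 2 = -1
        · have := i2 hq1; omega
        · have := i3 (by omega); omega

/-- The digit expansion property. -/
lemma negTwoDigits_isDigitExpansion (a : ℤ) (h : a ≠ 0) :
    IsDigitExpansion (-2) a (negTwoDigits a) := by
  refine ⟨fun d hd => ?_, ?_, ?_, negTwoDigits_baseVal a⟩
  · have := negTwoDigits_mem a d hd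
    norm_num
    omega
  · rw [negTwoDigits, if_neg h]; simp
  · rw [negTwoDigits, if_neg h, List.getLast!_cons_eq_getLastD]
    by_cases hq : (a % 2 - a) / 2 = 0
    · rw [hq, negTwoDigits_zero, List.getLastD_nil]; omega
    · rw [negTwoDigits_getLastD _ hq]; norm_num

lemma sq_sum_eq (L : List ℤ) (hL : ∀ d ∈ L, d = 0 ∨ d = 1) :
    (L.map (· ^ 2)).sum = L.sum := by
  induction L with
  | nil => rfl
  | cons d L ih =>
    simp only [List.map_cons, List.sum_cons]
    rw [ih (fun x hx => hL x (List.mem_cons_of_mem d hx))]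
    rcases hL d (List.mem_cons_self (a := d) (l := L)) with h | h <;> simp [h]

lemma S_eq (S : ℤ → ℤ) (hS : IsPowSumFun 2 (-2) S) (a : ℤ) (h : a ≠ 0) : S a = (negTwoDigits a).sum := by
  rw [hS.2 a _ (negTwoDigits_isDigitExpansion a h), sq_sum_eq _ (negTwoDigits_mem a)]

lemma S_props (S : ℤ → ℤ) (hS : IsPowSumFun 2 (-2) S) (a : ℤ) (h : 0 < a) :
    0 < S a ∧ S a % 3 = a % 3 ∧ S a ≤ a ∧ (4 ≤ a → S a < a) := by
  rw [S_eq S hS a (by omega)]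
  have h1 := negTwoDigits_sum a
  refine ⟨by omega, by omega, by omega, fun h4 => ?_⟩
  -- for a ≥ 4, unfold one step
  rw [negTwoDigits, if_neg (by omega : a ≠ 0), List.sum_cons]
  have h2 := negTwoDigits_sum ((a % 2 - a) / 2)
  omega

lemma forward (S : ℤ → ℤ) (hS : IsPowSumFun 2 (-2) S) : ∀ n : ℕ, ∀ a : ℤ, a.natAbs = n → 0 < a → a % 3 = 1 →
    ∃ k : ℕ, 1 ≤ k ∧ S^[k] a = 1 := by
  intro n
  induction n using Nat.strong_induction_on with
  | _ n ih =>
    intro a hn ha h3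
    obtain ⟨hpos, hmod, hle, hlt⟩ := S_props S hS a ha
    by_cases h1 : a = 1
    · refine ⟨1, le_refl 1, ?_⟩
      rw [Function.iterate_one, h1, S_eq S hS 1 one_ne_zero]
      rw [negTwoDigits, if_neg one_ne_zero]
      norm_num
      rw [negTwoDigits]
      norm_num
    · have h4 : 4 ≤ a := by omega
      obtain ⟨k, hk, hk1⟩ := ih (S a).natAbs (by omega) (S a) rfl hpos (by omega)
      exact ⟨k + 1, by omega, by rw [Function.iterate_add_apply, Function.iterate_one]; exact hk1⟩

lemma backward (S : ℤ → ℤ) (hS : IsPowSumFun 2 (-2) S) : ∀ k : ℕ, ∀ a : ℤ, 0 < a → S^[k] a = 1 → a % 3 = 1 := by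
  intro k
  induction k with
  | zero => intro a _ h; simp at h; omega
  | succ k ih =>
    intro a ha h
    rw [Function.iterate_succ_apply] at h
    obtain ⟨hpos, hmod, _, _⟩ := S_props S hS a ha
    have := ih (S a) hpos h
    omega

theorem neg_two_happy_iff (S : ℤ → ℤ) (hS : IsPowSumFun 2 (-2) S)
    (a : ℤ) (ha : 0 < a) :
    (∃ k : ℕ, 1 ≤ k ∧ S^[k] a = 1) ↔ a ≡ 1 [ZMOD 3] := by
  have hmod : a ≡ 1 [ZMOD 3] ↔ a % 3 = 1 := by
    unfold Int.ModEq
    omega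
  rw [hmod]
  constructor
  · rintro ⟨k, _, hk⟩
    exact backward S hS k a ha hk
  · intro h
    exact forward S hS a.natAbs a rfl ha h
end
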